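/- The heat kernel on hyperbolic 3-space is K_3(t,ρ) = (4πt)^{−3/2} e^{−t} e^{−ρ²/(4t)}·(ρ/sinh ρ), and for all t, ρ > 0, ∂²_ρ log K_3 − coth(ρ)·∂_ρ log K_3 > 0. -/

import Mathlib

open Real


lemma pos_of_deriv {p q : ℝ → ℝ} (hp0 : p 0 = 0)
    (hd : ∀ x, HasDerivAt p (q x) x) (hq : ∀ x, 0 < x → 0 < q x) :
    ∀ x, 0 < x → 0 < p x := by
  intro x hx
  have hdiff : Differentiable ℝ p := fun y => (hd y).differentiableAt
  have hmono : StrictMonoOn p (Set.Ici 0) := by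
    refine strictMonoOn_of_deriv_pos (convex_Ici 0) hdiff.continuous.continuousOn ?_
    intro y hy
    rw [interior_Ici] at hy
    rw [(hd y).deriv]
    exact hq y hy
  have := hmono Set.self_mem_Ici (le_of_lt hx) hx
  rwa [hp0] at this

lemma p3_pos : ∀ u, 0 < u → 0 < (u^2-4)*Real.sinh u + 4*u*Real.cosh u := by
  refine pos_of_deriv (q := fun x => 6*x*Real.sinh x + x^2*Real.cosh x)
    (by simp) (fun x => ?_) (fun x hx => ?_)
  · have h := (((hasDerivAt_pow 2 x).sub_const 4).mul (Real.hasDerivAt_sinh x)).add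
      ((hasDerivAt_id x).const_mul 4 |>.mul (Real.hasDerivAt_cosh x))
    refine h.congr_deriv ?_
    simp only [id_eq]
    ring
  · have h1 : 0 < Real.sinh x := Real.sinh_pos_iff.2 hx
    have h2 : 0 < Real.cosh x := Real.cosh_pos x
    positivity

lemma p2_pos : ∀ u, 0 < u → 0 < 6 + 2*u*Real.sinh u + (u^2-6)*Real.cosh u := by
  refine pos_of_deriv (q := fun u => (u^2-4)*Real.sinh u + 4*u*Real.cosh u)
    (by simp) (fun x => ?_) p3_pos
  have h := ((hasDerivAt_const x 6).add (((hasDerivAt_id x).const_mul 2).mul (Real.hasDerivAt_sinh x))).add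
      (((hasDerivAt_pow 2 x).sub_const 6).mul (Real.hasDerivAt_cosh x))
  refine h.congr_deriv ?_
  simp only [id_eq]
  ring

lemma p1_pos : ∀ u, 0 < u → 0 < 6*u + (u^2-6)*Real.sinh u := by
  refine pos_of_deriv (q := fun u => 6 + 2*u*Real.sinh u + (u^2-6)*Real.cosh u)
    (by simp) (fun x => ?_) p2_pos
  have h := ((hasDerivAt_id x).const_mul 6).add
      (((hasDerivAt_pow 2 x).sub_const 6).mul (Real.hasDerivAt_sinh x))
  refine h.congr_deriv ?_
  ring

lemma p0_pos : ∀ u, 0 < u → 0 < 3*u^2 + (u^2-4)*Real.cosh u - 2*u*Real.sinh u + 4 := by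
  refine pos_of_deriv (q := fun u => 6*u + (u^2-6)*Real.sinh u)
    (by simp) (fun x => ?_) p1_pos
  have h := ((((hasDerivAt_pow 2 x).const_mul 3).add
      (((hasDerivAt_pow 2 x).sub_const 4).mul (Real.hasDerivAt_cosh x))).sub
      (((hasDerivAt_id x).const_mul 2).mul (Real.hasDerivAt_sinh x))).add_const 4
  refine h.congr_deriv ?_
  simp only [id_eq]
  ring

lemma phi_pos (ρ : ℝ) (hρ : 0 < ρ) :
    0 < 2*ρ^2 + ρ^2*(Real.sinh ρ)^2 - ρ*Real.sinh ρ*Real.cosh ρ - (Real.sinh ρ)^2 := by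
  have h := p0_pos (2*ρ) (by linarith)
  rw [Real.cosh_two_mul, Real.sinh_two_mul] at h
  have hc := Real.cosh_sq ρ
  nlinarith [h, hc]

lemma coth_lt (ρ : ℝ) (hρ : 0 < ρ) : 0 < ρ * Real.cosh ρ - Real.sinh ρ := by
  refine pos_of_deriv (p := fun x => x * Real.cosh x - Real.sinh x)
    (q := fun x => x * Real.sinh x) (by simp) (fun x => ?_) (fun x hx => ?_) ρ hρ
  · have h := ((hasDerivAt_id x).mul (Real.hasDerivAt_cosh x)).sub (Real.hasDerivAt_sinh x)
    refine h.congr_deriv ?_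
    simp only [id_eq]
    ring
  · exact mul_pos hx (Real.sinh_pos_iff.2 hx)

/-- The heat kernel on hyperbolic 3-space, as a function of backward time `t > 0`
and hyperbolic distance `ρ > 0`. -/
noncomputable def K3 (t ρ : ℝ) : ℝ :=
  (4 * π * t) ^ (-(3:ℝ)/2) * Real.exp (-t) * Real.exp (-ρ ^ 2 / (4 * t)) * (ρ / Real.sinh ρ)

theorem K3_superconvex (t ρ : ℝ) (ht : 0 < t) (hρ : 0 < ρ) :
    0 < deriv (deriv (fun x => Real.log (K3 t x))) ρ -
        (Real.cosh ρ / Real.sinh ρ) * deriv (fun x => Real.log (K3 t x)) ρ := by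
  have hπ := Real.pi_pos
  set s := Real.sinh ρ with hs_def
  set c := Real.cosh ρ with hc_def
  have hs : 0 < s := Real.sinh_pos_iff.2 hρ
  set g : ℝ → ℝ := fun x =>
    Real.log ((4*π*t)^(-(3:ℝ)/2)) - t - x^2/(4*t) + Real.log x - Real.log (Real.sinh x) with hg_def
  set g1 : ℝ → ℝ := fun x => -(x/(2*t)) + x⁻¹ - Real.cosh x/Real.sinh x with hg1_def
  -- log K3 = g on Ioi 0
  have hfg : Set.EqOn (fun x => Real.log (K3 t x)) g (Set.Ioi 0) := by
    intro x hx
    have hx0 : (0:ℝ) < x := hx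
    have hsx : 0 < Real.sinh x := Real.sinh_pos_iff.2 hx0
    simp only [K3, hg_def]
    rw [Real.log_mul (by positivity) (div_ne_zero hx0.ne' hsx.ne'),
        Real.log_mul (by positivity) (Real.exp_ne_zero _),
        Real.log_mul (by positivity) (Real.exp_ne_zero _),
        Real.log_div hx0.ne' hsx.ne', Real.log_exp, Real.log_exp]
    ring
  -- derivative of g on Ioi 0
  have hg1 : ∀ x ∈ Set.Ioi (0:ℝ), HasDerivAt g (g1 x) x := by
    intro x hx
    have hx0 : (0:ℝ) < x := hx
    have hsx : 0 < Real.sinh x := Real.sinh_pos_iff.2 hx0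
    have h := ((((hasDerivAt_const x (Real.log ((4*π*t)^(-(3:ℝ)/2)))).sub
        (hasDerivAt_const x t)).sub ((hasDerivAt_pow 2 x).div_const (4*t))).add
        (Real.hasDerivAt_log hx0.ne')).sub ((Real.hasDerivAt_sinh x).log hsx.ne')
    refine h.congr_deriv ?_
    simp only [hg1_def]
    field_simp
    ring
  -- second derivative value
  have hg2 : HasDerivAt g1 (-(1/(2*t)) - 1/ρ^2 + 1/s^2) ρ := by
    have h := (((hasDerivAt_id ρ).div_const (2*t)).neg.add (hasDerivAt_inv hρ.ne')).sub
      ((Real.hasDerivAt_cosh ρ).div (Real.hasDerivAt_sinh ρ) hs.ne')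
    refine h.congr_deriv ?_
    rw [show Real.sinh ρ * Real.sinh ρ - Real.cosh ρ * Real.cosh ρ = -1 from by
      nlinarith [Real.cosh_sq ρ]]
    field_simp
    ring
  have hmem : Set.Ioi (0:ℝ) ∈ nhds ρ := isOpen_Ioi.mem_nhds hρ
  have hfe : (fun x => Real.log (K3 t x)) =ᶠ[nhds ρ] g := Filter.eventuallyEq_of_mem hmem hfg
  have e1 : deriv (fun x => Real.log (K3 t x)) ρ = g1 ρ := by
    rw [hfe.deriv_eq]; exact (hg1 ρ hρ).deriv
  have hde : deriv (fun x => Real.log (K3 t x)) =ᶠ[nhds ρ] g1 := by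
    refine (hfe.deriv).trans (Filter.eventuallyEq_of_mem hmem fun x hx => ?_)
    exact (hg1 x hx).deriv
  have e2 : deriv (deriv (fun x => Real.log (K3 t x))) ρ = -(1/(2*t)) - 1/ρ^2 + 1/s^2 := by
    rw [hde.deriv_eq]; exact hg2.deriv
  rw [e1, e2]
  have hg1ρ : g1 ρ = -(ρ/(2*t)) + ρ⁻¹ - c/s := rfl
  rw [hg1ρ]
  have hc2 : c^2 = s^2 + 1 := Real.cosh_sq ρ
  have key : -(1/(2*t)) - 1/ρ^2 + 1/s^2 - c/s * (-(ρ/(2*t)) + ρ⁻¹ - c/s)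
      = (ρ*c - s)/(2*t*s) + (2*ρ^2 + ρ^2*s^2 - ρ*s*c - s^2)/(ρ^2*s^2) + (c^2 - s^2 - 1)/s^2 := by
    field_simp
    ring
  have key' : -(1/(2*t)) - 1/ρ^2 + 1/s^2 - c/s * (-(ρ/(2*t)) + ρ⁻¹ - c/s)
      = (ρ*c - s)/(2*t*s) + (2*ρ^2 + ρ^2*s^2 - ρ*s*c - s^2)/(ρ^2*s^2) := by
    rw [key, hc2]
    ring
  rw [key']
  have h1 : 0 < (ρ*c - s)/(2*t*s) := by
    have := coth_lt ρ hρ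
    rw [← hs_def, ← hc_def] at *
    exact div_pos (by linarith) (by positivity)
  have h2 : 0 < (2*ρ^2 + ρ^2*s^2 - ρ*s*c - s^2)/(ρ^2*s^2) := by
    have := phi_pos ρ hρ
    exact div_pos (by rw [hs_def, hc_def]; linarith) (by positivity)
  linarith
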